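/- On the elliptic curve E : y² = x³ + (t⁴+1)x² - t²(t²-1)x + t⁴ over 𝔽₃(t), the point P = (0, t²) satisfies 2P = (t², -t⁴), and P is a torsion point of exact order 5. -/

import Mathlib

open WeierstrassCurve.Affine in
lemma my_some_congr {F : Type*} [Field F] {W : WeierstrassCurve.Affine F}
    {x₁ y₁ x₂ y₂ : F} (h₁ : W.Nonsingular x₁ y₁) (h₂ : W.Nonsingular x₂ y₂)
    (hx : x₁ = x₂) (hy : y₁ = y₂) : Point.some _ _ h₁ = Point.some _ _ h₂ := by
  subst hx; subst hy; rfl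

set_option maxHeartbeats 1000000 in
open Classical in
open WeierstrassCurve.Affine in
/-- On `y² = x³ + (t⁴+1)x² - t²(t²-1)x + t⁴` over `𝔽₃(t)`, the point `P = (0, t²)`
satisfies `2P = (t², -t⁴)`, and `P` is a torsion point of exact order `5`. -/
theorem stmt18 :
    letI t : RatFunc (ZMod 3) := RatFunc.X
    letI W : WeierstrassCurve.Affine (RatFunc (ZMod 3)) :=
      { a₁ := 0, a₂ := t ^ 4 + 1, a₃ := 0, a₄ := -(t ^ 2 * (t ^ 2 - 1)), a₆ := t ^ 4 }
    ∀ h : W.Nonsingular 0 (t ^ 2),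
      (∃ h2 : W.Nonsingular (t ^ 2) (-(t ^ 4)), 2 • Point.some _ _ h = Point.some _ _ h2) ∧
        addOrderOf (Point.some _ _ h) = 5 := by
  intro h
  set t : RatFunc (ZMod 3) := RatFunc.X with hts
  set W : WeierstrassCurve.Affine (RatFunc (ZMod 3)) :=
    { a₁ := 0, a₂ := t ^ 4 + 1, a₃ := 0, a₄ := -(t ^ 2 * (t ^ 2 - 1)), a₆ := t ^ 4 } with hW
  haveI : CharP (RatFunc (ZMod 3)) 3 :=
    charP_of_injective_algebraMap (algebraMap (ZMod 3) (RatFunc (ZMod 3))).injective 3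
  have h3 : (3 : RatFunc (ZMod 3)) = 0 := CharP.cast_eq_zero (RatFunc (ZMod 3)) 3
  have ht : t ≠ 0 := RatFunc.X_ne_zero
  have ht2 : t ^ 2 ≠ 0 := pow_ne_zero 2 ht
  have ht4 : t ^ 4 ≠ 0 := pow_ne_zero 4 ht
  have hne : ∀ a b : RatFunc (ZMod 3), a ≠ 0 → a ≠ -a - 0 * b - 0 := by
    intro a b ha heq
    apply ha
    have h2 : (2 : RatFunc (ZMod 3)) * a = 0 := by linear_combination heq
    rcases mul_eq_zero.mp h2 with h' | h'
    · exact absurd h'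
        (by rw [show (2 : RatFunc (ZMod 3)) = -1 by linear_combination h3]
            exact neg_ne_zero.mpr one_ne_zero)
    · exact h'
  -- basic inequalities
  have hy1 : t ^ 2 ≠ W.negY 0 (t ^ 2) := by
    simp only [hW, negY]; exact hne _ _ ht2
  have hy2 : -(t ^ 4) ≠ W.negY (t ^ 2) (-(t ^ 4)) := by
    simp only [hW, negY]; exact hne _ _ (neg_ne_zero.mpr ht4)
  -- slopes
  have hs1 : W.slope 0 0 (t ^ 2) (t ^ 2) = t ^ 2 - 1 := by
    rw [slope_of_Y_ne rfl hy1]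
    simp only [hW, negY]
    rw [div_eq_iff (by intro heq; apply ht2; linear_combination 2 * heq - t ^ 2 * h3)]
    linear_combination (t ^ 2 - t ^ 4) * h3
  have hs2 : W.slope (t ^ 2) (t ^ 2) (-(t ^ 4)) (-(t ^ 4)) = -(t ^ 2) - 1 := by
    rw [slope_of_Y_ne rfl hy2]
    simp only [hW, negY]
    rw [div_eq_iff (by intro heq; apply ht4; linear_combination heq + t ^ 4 * h3)]
    linear_combination t ^ 2 * h3
  -- nonsingular points
  have hQ : W.Nonsingular (t ^ 2) (-(t ^ 4)) := by
    rw [nonsingular_iff]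
    constructor
    · rw [equation_iff]; simp only [hW]; linear_combination (-(t ^ 4)) * h3
    · right
      simp only [hW]
      exact hne _ _ (neg_ne_zero.mpr ht4)
  have hR : W.Nonsingular 0 (-(t ^ 2)) := by
    rw [nonsingular_iff]
    constructor
    · rw [equation_iff]; simp only [hW]; ring
    · right
      simp only [hW]
      exact hne _ _ (neg_ne_zero.mpr ht2)
  set P := Point.some _ _ h with hP
  -- 2P
  have e2 : P + P = Point.some _ _ hQ := by
    rw [hP, Point.add_self_of_Y_ne hy1]
    refine my_some_congr _ _ ?_ ?_
    · rw [hs1]; simp only [hW, addX]; linear_combination (-(t ^ 2)) * h3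
    · rw [hs1]; simp only [hW, addY, addX, negAddY, negY]
      linear_combination (t ^ 4 - t ^ 2) * h3
  have e4 : Point.some _ _ hQ + Point.some _ _ hQ = Point.some _ _ hR := by
    rw [Point.add_self_of_Y_ne hy2]
    refine my_some_congr _ _ ?_ ?_
    · rw [hs2]; simp only [hW, addX]; ring
    · rw [hs2]; simp only [hW, addY, addX, negAddY, negY]; ring
  have e5 : P + Point.some _ _ hR = 0 := by
    rw [hP]
    exact Point.add_of_Y_eq rfl (by simp only [hW, negY]; ring)
  have h5 : 5 • P = 0 := by
    rw [show (5 : ℕ) • P = P + ((P + P) + (P + P)) by abel, e2, e4, e5]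
  constructor
  · exact ⟨hQ, by rw [two_nsmul]; exact e2⟩
  · haveI : Fact (Nat.Prime 5) := ⟨by norm_num⟩
    exact addOrderOf_eq_prime h5 (Point.some_ne_zero h)
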